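/- arXiv:1909.09336 — 2 statements merged into one kernel-verified Lean document; each statement's English description precedes it below -/
import Mathlib

section
/- Finite mixtures of two-dimensional product-Poisson distributions are identifiable: if G and G' are probability measures on (0,∞)² (each supported on finitely many points) such that ∫ Poisson(ξ₁)(w₁)·Poisson(ξ₂)(w₂) dG(ξ₁,ξ₂) = ∫ Poisson(ξ₁)(w₁)·Poisson(ξ₂)(w₂) dG'(ξ₁,ξ₂) for all (w₁,w₂) ∈ ℕ², then G = G'. -/
open MeasureTheory
open scoped Classical

/-- Poisson pmf with rate `r` evaluated at `w`. -/
noncomputable def poissonPdf (r : ℝ) (w : ℕ) : ℝ :=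
  Real.exp (-r) * r ^ w / (Nat.factorial w)

/-- 1D linear independence of geometric sequences via Vandermonde. -/
lemma sum_pow_eq_zero_of_forall {t : Finset ℝ} {d : ℝ → ℝ}
    (h : ∀ n : ℕ, ∑ a ∈ t, d a * a ^ n = 0) : ∀ a ∈ t, d a = 0 := by
  classical
  intro a ha
  set n := t.card with hn
  let σ : Fin n ≃ {x // x ∈ t} := t.equivFin.symm
  set v : Fin n → ℝ := fun i => (σ i : ℝ) with hv
  have hvinj : Function.Injective v := by
    intro i j hij
    exact σ.injective (Subtype.ext hij)
  have hdet : (Matrix.vandermonde v).det ≠ 0 :=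
    Matrix.det_vandermonde_ne_zero_iff.mpr hvinj
  have key : ∀ j : Fin n, ∑ i : Fin n, d (v i) * v i ^ (j : ℕ) = 0 := by
    intro j
    have h1 : ∑ x : {x // x ∈ t}, d (x : ℝ) * (x : ℝ) ^ (j : ℕ) = 0 := by
      rw [Finset.sum_coe_sort t (fun a => d a * a ^ (j : ℕ))]
      exact h j
    rw [← Equiv.sum_comp σ (fun x : {x // x ∈ t} => d (x : ℝ) * (x : ℝ) ^ (j : ℕ))] at h1
    exact h1
  have hvm : Matrix.vecMul (fun i => d (v i)) (Matrix.vandermonde v) = 0 := by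
    funext j
    simpa [Matrix.vecMul, dotProduct, Matrix.vandermonde] using key j
  have hzero : (fun i => d (v i)) = 0 :=
    Matrix.eq_zero_of_vecMul_eq_zero hdet hvm
  have : d (v (σ.symm ⟨a, ha⟩)) = 0 := congrFun hzero _
  simpa [hv, Equiv.apply_symm_apply] using this

/-- 2D linear independence of product geometric sequences. -/
lemma sum_pow2_eq_zero_of_forall {t : Finset (ℝ × ℝ)} {d : ℝ × ℝ → ℝ}
    (h : ∀ w v : ℕ, ∑ p ∈ t, d p * p.1 ^ w * p.2 ^ v = 0) :
    ∀ p ∈ t, d p = 0 := by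
  classical
  intro p hp
  set A := t.image Prod.fst with hA
  have h1 : ∀ v : ℕ, ∀ a ∈ A,
      ∑ q ∈ t.filter (fun q => q.1 = a), d q * q.2 ^ v = 0 := by
    intro v
    apply sum_pow_eq_zero_of_forall
      (d := fun a => ∑ q ∈ t.filter (fun q => q.1 = a), d q * q.2 ^ v)
    intro w
    have fib : ∑ a ∈ A, ∑ q ∈ t.filter (fun q => q.1 = a),
        (d q * q.1 ^ w * q.2 ^ v) = ∑ q ∈ t, d q * q.1 ^ w * q.2 ^ v := by
      apply Finset.sum_fiberwise_of_maps_to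
      intro x hx
      exact Finset.mem_image_of_mem Prod.fst hx
    calc ∑ a ∈ A, (∑ q ∈ t.filter (fun q => q.1 = a), d q * q.2 ^ v) * a ^ w
        = ∑ a ∈ A, ∑ q ∈ t.filter (fun q => q.1 = a),
            (d q * q.1 ^ w * q.2 ^ v) := by
          refine Finset.sum_congr rfl (fun a _ => ?_)
          rw [Finset.sum_mul]
          refine Finset.sum_congr rfl (fun q hq => ?_)
          have : q.1 = a := (Finset.mem_filter.mp hq).2
          rw [this]; ring
      _ = 0 := by rw [fib]; exact h w v
  -- now fix a = p.1 and use second coordinate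
  set a := p.1 with ha
  have hpa : p ∈ t.filter (fun q => q.1 = a) := by
    simp [Finset.mem_filter, hp, ha]
  set F := t.filter (fun q => q.1 = a) with hF
  have h2 : ∀ v : ℕ, ∑ b ∈ F.image Prod.snd, d (a, b) * b ^ v = 0 := by
    intro v
    have hinj : ∀ x ∈ F, ∀ y ∈ F, x.2 = y.2 → x = y := by
      intro x hx y hy hxy
      have hx1 : x.1 = a := (Finset.mem_filter.mp hx).2
      have hy1 : y.1 = a := (Finset.mem_filter.mp hy).2
      exact Prod.ext (hx1.trans hy1.symm) hxy
    rw [Finset.sum_image hinj]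
    have := h1 v a (Finset.mem_image_of_mem Prod.fst hp)
    rw [← hF] at this
    rw [← this]
    refine Finset.sum_congr rfl (fun q hq => ?_)
    have hq1 : q.1 = a := (Finset.mem_filter.mp hq).2
    rw [← hq1]
  have h3 := sum_pow_eq_zero_of_forall (t := F.image Prod.snd)
      (d := fun b => d (a, b)) (fun v => h2 v) p.2
      (Finset.mem_image_of_mem Prod.snd hpa)
  simpa [ha] using h3

/-- A measure supported on a finite set evaluates as a sum of point masses. -/
lemma measure_apply_of_finite_support {μ : Measure (ℝ × ℝ)} {t : Finset (ℝ × ℝ)}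
    (ht : μ (↑t)ᶜ = 0) {A : Set (ℝ × ℝ)} (hA : MeasurableSet A) :
    μ A = ∑ p ∈ t.filter (· ∈ A), μ {p} := by
  classical
  have h1 : μ (A \ ↑t) = 0 :=
    measure_mono_null (Set.diff_subset_compl A ↑t) ht
  have h2 : μ A = μ (A ∩ ↑t) := by
    have := measure_inter_add_diff (μ := μ) A (t.measurableSet)
    rw [h1, add_zero] at this
    exact this.symm
  have h3 : A ∩ ↑t = ↑(t.filter (· ∈ A)) := by
    ext x; simp [and_comm]
  rw [h2, h3]
  have h4 : (↑(t.filter (· ∈ A)) : Set (ℝ × ℝ)) = ⋃ p ∈ t.filter (· ∈ A), ({p} : Set (ℝ × ℝ)) := by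
    ext x; simp
  rw [h4, measure_biUnion_finset]
  · intro x _ y _ hxy
    simp [Function.onFun, Set.disjoint_singleton, hxy]
  · intro x _
    exact measurableSet_singleton x

lemma integral_of_finite_support {μ : Measure (ℝ × ℝ)} [IsFiniteMeasure μ]
    {t : Finset (ℝ × ℝ)} (ht : μ (↑t)ᶜ = 0) (f : ℝ × ℝ → ℝ) :
    ∫ p, f p ∂μ = ∑ p ∈ t, (μ {p}).toReal * f p := by
  have hmem : ∀ᵐ x ∂μ, x ∈ (↑t : Set (ℝ × ℝ)) := by
    rw [MeasureTheory.ae_iff]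
    exact ht
  rw [← Measure.restrict_eq_self_of_ae_mem hmem]
  rw [MeasureTheory.integral_finset t (f := f) IntegrableOn.finset]
  simp [Measure.restrict_eq_self_of_ae_mem hmem, smul_eq_mul, measureReal_def]

/-- Finite mixtures of two-dimensional product-Poisson distributions are
identifiable: if two finitely supported probability measures `G, G'` on
`(0,∞)²` induce the same mixed product-Poisson distribution on `ℕ²`,
then `G = G'`. -/
theorem product_poisson_mixture_identifiable
    (G G' : Measure (ℝ × ℝ)) [IsProbabilityMeasure G] [IsProbabilityMeasure G']
    (hGfin : ∃ s : Finset (ℝ × ℝ), G (↑s)ᶜ = 0)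
    (hG'fin : ∃ s : Finset (ℝ × ℝ), G' (↑s)ᶜ = 0)
    (hGsupp : G {ξ | ¬ (0 < ξ.1 ∧ 0 < ξ.2)} = 0)
    (hG'supp : G' {ξ | ¬ (0 < ξ.1 ∧ 0 < ξ.2)} = 0)
    (hmix : ∀ w₁ w₂ : ℕ,
      ∫ ξ, poissonPdf ξ.1 w₁ * poissonPdf ξ.2 w₂ ∂G
        = ∫ ξ, poissonPdf ξ.1 w₁ * poissonPdf ξ.2 w₂ ∂G') :
    G = G' := by
  classical
  obtain ⟨s, hs⟩ := hGfin
  obtain ⟨s', hs'⟩ := hG'fin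
  set t : Finset (ℝ × ℝ) := s ∪ s' with htdef
  have htG : G (↑t)ᶜ = 0 := by
    refine measure_mono_null ?_ hs
    intro x hx
    simp only [Set.mem_compl_iff, Finset.coe_union, Set.mem_union, Finset.mem_coe,
      htdef] at hx ⊢
    tauto
  have htG' : G' (↑t)ᶜ = 0 := by
    refine measure_mono_null ?_ hs'
    intro x hx
    simp only [Set.mem_compl_iff, Finset.coe_union, Set.mem_union, Finset.mem_coe,
      htdef] at hx ⊢
    tauto
  -- the signed coefficient
  set c : ℝ × ℝ → ℝ := fun p => (G {p}).toReal - (G' {p}).toReal with hc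
  have hzero : ∀ p ∈ t, c p = 0 := by
    have key : ∀ w v : ℕ, ∑ p ∈ t,
        (c p * Real.exp (-p.1) * Real.exp (-p.2)) * p.1 ^ w * p.2 ^ v = 0 := by
      intro w v
      have h1 := hmix w v
      rw [integral_of_finite_support htG, integral_of_finite_support htG'] at h1
      have h2 : ∑ p ∈ t, c p * (poissonPdf p.1 w * poissonPdf p.2 v) = 0 := by
        rw [show (fun p => c p * (poissonPdf p.1 w * poissonPdf p.2 v)) = fun p =>
          (G {p}).toReal * (poissonPdf p.1 w * poissonPdf p.2 v)
            - (G' {p}).toReal * (poissonPdf p.1 w * poissonPdf p.2 v) from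
          funext (fun p => by simp only [hc]; ring)]
        rw [Finset.sum_sub_distrib, h1, sub_self]
      have hfac : ((Nat.factorial w : ℝ) * Nat.factorial v) ≠ 0 := by
        positivity
      have h4 : (∑ p ∈ t,
          (c p * Real.exp (-p.1) * Real.exp (-p.2)) * p.1 ^ w * p.2 ^ v)
            / ((Nat.factorial w : ℝ) * Nat.factorial v) = 0 := by
        rw [Finset.sum_div, ← h2]
        refine Finset.sum_congr rfl (fun p _ => ?_)
        simp only [poissonPdf]
        field_simp
      exact (div_eq_zero_iff.mp h4).resolve_right hfac
    intro p hp
    have := sum_pow2_eq_zero_of_forall key p hp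
    have hexp : Real.exp (-p.1) ≠ 0 := Real.exp_ne_zero _
    have hexp2 : Real.exp (-p.2) ≠ 0 := Real.exp_ne_zero _
    have : c p * Real.exp (-p.1) * Real.exp (-p.2) = 0 := this
    rcases mul_eq_zero.mp this with h | h
    · rcases mul_eq_zero.mp h with h' | h'
      · exact h'
      · exact absurd h' hexp
    · exact absurd h hexp2
  have hpoint : ∀ p ∈ t, G {p} = G' {p} := by
    intro p hp
    have h0 := hzero p hp
    have hne : G {p} ≠ ⊤ := measure_ne_top G _
    have hne' : G' {p} ≠ ⊤ := measure_ne_top G' _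
    have : (G {p}).toReal = (G' {p}).toReal := by
      have h0' : (G {p}).toReal - (G' {p}).toReal = 0 := by simpa [hc] using h0
      linarith
    exact (ENNReal.toReal_eq_toReal_iff' hne hne').mp this
  ext A hA
  rw [measure_apply_of_finite_support htG hA, measure_apply_of_finite_support htG' hA]
  refine Finset.sum_congr rfl (fun p hp => hpoint p (Finset.mem_filter.mp hp).1)
end

section
/- Let (ξ₁, ξ₂) have distribution G on [0,M]² with G({ξ₁+ξ₂ = 0}) = 0, and let Ĝₙ be probability measures on [0,M]² converging weakly to G. Define ψ_ε(ξ₁,ξ₂) = (ξ₁/(ξ₁+ξ₂))·1{ξ₁+ξ₂ > ε}. Then lim_{ε→0} E_G ψ_ε = E_G[ξ₁/(ξ₁+ξ₂)] and, for each ε > 0 with G({ξ₁+ξ₂ = ε}) = 0, E_{Ĝₙ} ψ_ε → E_G ψ_ε. -/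
open MeasureTheory Filter
open scoped Topology

/-- Corollary to Theorem 1: with `ψ_ε(ξ₁,ξ₂) = (ξ₁/(ξ₁+ξ₂))·1{ξ₁+ξ₂ > ε}`,
if `G` is supported on `[0,M]²` with `G({ξ₁+ξ₂ = 0}) = 0` and `Ĝₙ → G` weakly
(all supported on `[0,M]²`), then `E_G ψ_ε → E_G[ξ₁/(ξ₁+ξ₂)]` as `ε → 0⁺`, and
for each `ε > 0` with `G({ξ₁+ξ₂ = ε}) = 0`, `E_{Ĝₙ} ψ_ε → E_G ψ_ε`. -/
theorem gmle_plugin_consistency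
    (M : ℝ) (hM : 0 < M)
    (G : ProbabilityMeasure (ℝ × ℝ)) (Ghat : ℕ → ProbabilityMeasure (ℝ × ℝ))
    (hGsupp : (G : Measure (ℝ × ℝ)) (Set.Icc 0 M ×ˢ Set.Icc 0 M)ᶜ = 0)
    (hGhatsupp : ∀ n, (Ghat n : Measure (ℝ × ℝ)) (Set.Icc 0 M ×ˢ Set.Icc 0 M)ᶜ = 0)
    (hzero : (G : Measure (ℝ × ℝ)) {ξ | ξ.1 + ξ.2 = 0} = 0)
    (hconv : Tendsto Ghat atTop (𝓝 G))
    (ψ : ℝ → ℝ × ℝ → ℝ)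
    (hψ : ∀ ε ξ, ψ ε ξ = if ε < ξ.1 + ξ.2 then ξ.1 / (ξ.1 + ξ.2) else 0) :
    Tendsto (fun ε => ∫ ξ, ψ ε ξ ∂(G : Measure (ℝ × ℝ))) (𝓝[>] (0 : ℝ))
        (𝓝 (∫ ξ, ξ.1 / (ξ.1 + ξ.2) ∂(G : Measure (ℝ × ℝ))))
      ∧ ∀ ε : ℝ, 0 < ε → (G : Measure (ℝ × ℝ)) {ξ | ξ.1 + ξ.2 = ε} = 0 →
          Tendsto (fun n => ∫ ξ, ψ ε ξ ∂(Ghat n : Measure (ℝ × ℝ))) atTop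
            (𝓝 (∫ ξ, ψ ε ξ ∂(G : Measure (ℝ × ℝ)))) := by
  have smeas : Measurable (fun ξ : ℝ × ℝ => ξ.1 + ξ.2) := measurable_fst.add measurable_snd
  have scont : Continuous (fun ξ : ℝ × ℝ => ξ.1 + ξ.2) := continuous_fst.add continuous_snd
  have hψ' : ∀ ε, ψ ε = fun ξ : ℝ × ℝ => if ε < ξ.1 + ξ.2 then ξ.1 / (ξ.1 + ξ.2) else 0 :=
    fun ε => funext (hψ ε)
  have ψmeas : ∀ ε, Measurable (ψ ε) := by
    intro ε; rw [hψ']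
    exact Measurable.ite (measurableSet_lt measurable_const smeas)
      (measurable_fst.div smeas) measurable_const
  -- a.e. membership in the square
  have sq_ae : ∀ (ν : Measure (ℝ × ℝ)), ν (Set.Icc 0 M ×ˢ Set.Icc 0 M)ᶜ = 0 →
      ∀ᵐ ξ ∂ν, (0 ≤ ξ.1 ∧ ξ.1 ≤ M) ∧ (0 ≤ ξ.2 ∧ ξ.2 ≤ M) := by
    intro ν hν
    have h : ∀ᵐ ξ ∂ν, ξ ∈ Set.Icc (0:ℝ) M ×ˢ Set.Icc (0:ℝ) M := mem_ae_iff.mpr hν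
    filter_upwards [h] with ξ hξ
    obtain ⟨h1, h2⟩ := Set.mem_prod.mp hξ
    exact ⟨⟨h1.1, h1.2⟩, ⟨h2.1, h2.2⟩⟩
  -- bound on the square
  have ψ_bound : ∀ ε : ℝ, 0 < ε → ∀ ξ : ℝ × ℝ,
      (0 ≤ ξ.1 ∧ ξ.1 ≤ M) ∧ (0 ≤ ξ.2 ∧ ξ.2 ≤ M) → 0 ≤ ψ ε ξ ∧ ψ ε ξ ≤ 1 := by
    intro ε hε ξ ⟨⟨h1, _⟩, ⟨h2, _⟩⟩
    rw [hψ]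
    split_ifs with h
    · have hs : 0 < ξ.1 + ξ.2 := hε.trans h
      exact ⟨div_nonneg h1 hs.le, (div_le_one hs).mpr (by linarith)⟩
    · exact ⟨le_refl 0, zero_le_one⟩
  have ψint : ∀ ε : ℝ, 0 < ε → ∀ (ν : Measure (ℝ × ℝ)) [IsProbabilityMeasure ν],
      ν (Set.Icc 0 M ×ˢ Set.Icc 0 M)ᶜ = 0 → Integrable (ψ ε) ν := by
    intro ε hε ν _ hν
    refine Integrable.mono' (integrable_const 1) (ψmeas ε).aestronglyMeasurable ?_
    filter_upwards [sq_ae ν hν] with ξ hξ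
    have := ψ_bound ε hε ξ hξ
    rw [Real.norm_eq_abs, abs_le]
    exact ⟨by linarith [this.1], this.2⟩
  constructor
  · -- Part 1 : dominated convergence as ε → 0⁺
    have hs_pos : ∀ᵐ ξ ∂(G : Measure (ℝ × ℝ)), 0 < ξ.1 + ξ.2 := by
      have hne : ∀ᵐ ξ ∂(G : Measure (ℝ × ℝ)), ¬ (ξ.1 + ξ.2 = 0) := by
        rw [ae_iff]; simpa only [not_not] using hzero
      filter_upwards [sq_ae G hGsupp, hne] with ξ hξ hne'
      rcases lt_or_eq_of_le (by linarith [hξ.1.1, hξ.2.1] : (0:ℝ) ≤ ξ.1 + ξ.2) with h | h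
      · exact h
      · exact absurd h.symm hne'
    apply tendsto_integral_filter_of_dominated_convergence (bound := fun _ => (1 : ℝ))
    · exact Eventually.of_forall fun ε => (ψmeas ε).aestronglyMeasurable
    · filter_upwards [self_mem_nhdsWithin] with ε hε
      filter_upwards [sq_ae G hGsupp] with ξ hξ
      have := ψ_bound ε hε ξ hξ
      rw [Real.norm_eq_abs, abs_le]
      exact ⟨by linarith [this.1], this.2⟩
    · exact integrable_const 1
    · filter_upwards [hs_pos] with ξ hs
      have hev : ∀ᶠ ε in 𝓝[>] (0:ℝ), ψ ε ξ = ξ.1 / (ξ.1 + ξ.2) := by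
        filter_upwards [Ioo_mem_nhdsGT_of_mem (Set.left_mem_Ico.mpr hs)] with ε hε
        rw [hψ, if_pos hε.2]
      exact tendsto_const_nhds.congr' (by filter_upwards [hev] with ε h using h.symm)
  · -- Part 2 : weak convergence at continuity levels ε
    intro ε hε hnull
    -- clamp and the continuous ratio function
    set c : ℝ → ℝ := fun t => min (max t 0) M with hc
    have ccont : Continuous c := (continuous_id.max continuous_const).min continuous_const
    have c_nonneg : ∀ t, 0 ≤ c t := fun t => le_min (le_max_right t 0) hM.le
    have c_eq : ∀ t, 0 ≤ t → t ≤ M → c t = t := by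
      intro t h0 h1; simp [hc, max_eq_left h0, min_eq_left h1]
    set hfun : ℝ × ℝ → ℝ := fun ξ => c ξ.1 / max (c ξ.1 + c ξ.2) (ε/2) with hhfun
    have hfun_cont : Continuous hfun := by
      apply Continuous.div ((ccont.comp continuous_fst))
        (((ccont.comp continuous_fst).add (ccont.comp continuous_snd)).max continuous_const)
      intro ξ
      have : (0:ℝ) < ε/2 := by linarith
      exact ne_of_gt (lt_of_lt_of_le this (le_max_right _ _))
    have hfun_mem : ∀ ξ, 0 ≤ hfun ξ ∧ hfun ξ ≤ 1 := by
      intro ξ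
      have hden : (0:ℝ) < max (c ξ.1 + c ξ.2) (ε/2) :=
        lt_of_lt_of_le (by linarith) (le_max_right _ _)
      refine ⟨div_nonneg (c_nonneg _) hden.le, (div_le_one hden).mpr ?_⟩
      calc c ξ.1 ≤ c ξ.1 + c ξ.2 := by linarith [c_nonneg ξ.2]
        _ ≤ max (c ξ.1 + c ξ.2) (ε/2) := le_max_left _ _
    rw [Metric.tendsto_nhds]
    intro η hη
    -- choose a thin strip around the level ε with small G-measure
    set B : ℕ → Set (ℝ × ℝ) := fun k =>
      (fun ξ : ℝ × ℝ => ξ.1 + ξ.2) ⁻¹' Set.Icc (ε - ε/(k+2)) (ε + 2*(ε/(k+2))) with hB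
    have Bmeas : ∀ k, MeasurableSet (B k) := fun k => smeas measurableSet_Icc
    have Banti : Antitone B := by
      intro k m hkm
      apply Set.preimage_mono
      apply Set.Icc_subset_Icc
      all_goals {
        have hmono : ε/((m:ℝ)+2) ≤ ε/((k:ℝ)+2) := by
          apply div_le_div_of_nonneg_left hε.le (by positivity)
          exact_mod_cast Nat.add_le_add_right hkm 2
        linarith }
    have hsub : (⋂ k, B k) ⊆ {ξ : ℝ × ℝ | ξ.1 + ξ.2 = ε} := by
      intro ξ hξ
      have hall : ∀ k : ℕ, |ξ.1 + ξ.2 - ε| ≤ 2*(ε/((k:ℝ)+2)) := by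
        intro k
        have := Set.mem_iInter.mp hξ k
        rw [hB] at this
        simp only [Set.mem_preimage, Set.mem_Icc] at this
        rw [abs_le]
        constructor
        · have hd : (0:ℝ) < ((k:ℝ)+2) := by positivity
          have : ε - ε/((k:ℝ)+2) ≤ ξ.1 + ξ.2 := this.1
          have hεk : (0:ℝ) ≤ ε/((k:ℝ)+2) := by positivity
          nlinarith
        · linarith [this.2]
      by_contra hne
      have hd : (0:ℝ) < |ξ.1 + ξ.2 - ε| := abs_pos.mpr (sub_ne_zero.mpr hne)
      obtain ⟨k, hk⟩ := exists_nat_gt (2*ε/|ξ.1 + ξ.2 - ε|)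
      have hk2 : 2*ε/|ξ.1 + ξ.2 - ε| < (k:ℝ)+2 := by linarith
      have hmul : 2*ε < ((k:ℝ)+2) * |ξ.1 + ξ.2 - ε| := (div_lt_iff₀ hd).mp hk2
      have hk3 : (0:ℝ) < (k:ℝ)+2 := by positivity
      have hcon : 2*(ε/((k:ℝ)+2)) < |ξ.1 + ξ.2 - ε| := by
        rw [show 2*(ε/((k:ℝ)+2)) = 2*ε/((k:ℝ)+2) from by ring, div_lt_iff₀ hk3]
        nlinarith [hmul]
      exact absurd (hall k) (not_le.mpr hcon)
    have hB0 : Tendsto (fun k => (G : Measure (ℝ × ℝ)) (B k)) atTop (𝓝 0) := by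
      have h := tendsto_measure_iInter_atTop (μ := (G : Measure (ℝ × ℝ)))
        (fun k => (Bmeas k).nullMeasurableSet) Banti ⟨0, measure_ne_top _ _⟩
      rwa [show (G : Measure (ℝ × ℝ)) (⋂ k, B k) = 0 from
        measure_mono_null hsub hnull] at h
    obtain ⟨k, hk⟩ : ∃ k, (G : Measure (ℝ × ℝ)) (B k) < ENNReal.ofReal (η/4) :=
      (hB0.eventually_lt_const (by simp [ENNReal.ofReal_pos]; positivity)).exists
    set δ : ℝ := ε/((k:ℝ)+2) with hδ
    have hδpos : 0 < δ := by positivity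
    -- continuous sandwich functions
    set φ : ℝ → ℝ := fun t => min (max ((t-ε)/δ) 0) 1 with hφ
    have φcont : Continuous φ :=
      (((continuous_id.sub continuous_const).div_const δ).max continuous_const).min
        continuous_const
    have φ_mem : ∀ t, 0 ≤ φ t ∧ φ t ≤ 1 := fun t =>
      ⟨le_min (le_max_right _ 0) zero_le_one, min_le_right _ 1⟩
    set w : ℝ → ℝ := fun t =>
      max (min (min ((t-(ε-δ))/δ) ((ε+2*δ-t)/δ)) 1) 0 with hw
    have wcont : Continuous w := by
      apply Continuous.max _ continuous_const
      apply Continuous.min _ continuous_const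
      exact ((continuous_id.sub continuous_const).div_const δ).min
        ((continuous_const.sub continuous_id).div_const δ)
    have w_mem : ∀ t, 0 ≤ w t ∧ w t ≤ 1 := fun t =>
      ⟨le_max_right _ 0, max_le (min_le_right _ 1) zero_le_one⟩
    set g : ℝ × ℝ → ℝ := fun ξ => hfun ξ * φ (ξ.1 + ξ.2) with hg
    set W : ℝ × ℝ → ℝ := fun ξ => w (ξ.1 + ξ.2) with hW
    have gcont : Continuous g := hfun_cont.mul (φcont.comp scont)
    have Wcont : Continuous W := wcont.comp scont
    have g_mem : ∀ ξ, 0 ≤ g ξ ∧ g ξ ≤ 1 := by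
      intro ξ
      exact ⟨mul_nonneg (hfun_mem ξ).1 (φ_mem _).1,
        mul_le_one₀ (hfun_mem ξ).2 (φ_mem _).1 (φ_mem _).2⟩
    have W_mem : ∀ ξ : ℝ × ℝ, 0 ≤ W ξ ∧ W ξ ≤ 1 := fun ξ => w_mem _
    -- the key pointwise sandwich on the square
    have sandwich : ∀ ξ : ℝ × ℝ, (0 ≤ ξ.1 ∧ ξ.1 ≤ M) → (0 ≤ ξ.2 ∧ ξ.2 ≤ M) →
        g ξ ≤ ψ ε ξ ∧ ψ ε ξ ≤ g ξ + W ξ := by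
      intro ξ h1 h2
      have hc1 : c ξ.1 = ξ.1 := c_eq _ h1.1 h1.2
      have hc2 : c ξ.2 = ξ.2 := c_eq _ h2.1 h2.2
      rw [hψ]
      split_ifs with hlt
      · -- ε < s
        have hs : 0 < ξ.1 + ξ.2 := hε.trans hlt
        have hmax : max (c ξ.1 + c ξ.2) (ε/2) = ξ.1 + ξ.2 := by
          rw [hc1, hc2]; exact max_eq_left (by linarith)
        have hfeq : hfun ξ = ξ.1 / (ξ.1 + ξ.2) := by rw [hhfun]; simp only; rw [hmax, hc1]
        have hψ01 : 0 ≤ ξ.1 / (ξ.1 + ξ.2) ∧ ξ.1 / (ξ.1 + ξ.2) ≤ 1 :=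
          ⟨div_nonneg h1.1 hs.le, (div_le_one hs).mpr (by linarith [h2.1])⟩
        by_cases hcase : ε + δ ≤ ξ.1 + ξ.2
        · have hφ1 : φ (ξ.1 + ξ.2) = 1 := by
            have h1' : (1:ℝ) ≤ (ξ.1 + ξ.2 - ε)/δ := (le_div_iff₀ hδpos).mpr (by linarith)
            rw [hφ]; simp only
            rw [max_eq_left (by linarith : (0:ℝ) ≤ (ξ.1 + ξ.2 - ε)/δ),
              min_eq_right h1']
          constructor
          · rw [hg]; simp only; rw [hφ1, mul_one, hfeq]
          · rw [hg]; simp only; rw [hφ1, mul_one, hfeq]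
            linarith [(W_mem ξ).1]
        · -- ε < s < ε + δ : W = 1
          push_neg at hcase
          have hW1 : W ξ = 1 := by
            have hA : (1:ℝ) ≤ (ξ.1 + ξ.2 - (ε-δ))/δ := (le_div_iff₀ hδpos).mpr (by linarith)
            have hB' : (1:ℝ) ≤ (ε+2*δ - (ξ.1 + ξ.2))/δ := (le_div_iff₀ hδpos).mpr (by linarith)
            rw [hW, hw]; simp only
            rw [min_eq_right (le_min hA hB'), max_eq_left zero_le_one]
          constructor
          · rw [hg]; simp only; rw [hfeq]
            exact mul_le_of_le_one_right hψ01.1 (φ_mem _).2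
          · rw [hW1]
            have := (g_mem ξ).1
            linarith [hψ01.2]
      · -- s ≤ ε
        push_neg at hlt
        have hφ0 : φ (ξ.1 + ξ.2) = 0 := by
          rw [hφ]; simp only
          rw [max_eq_right (div_nonpos_of_nonpos_of_nonneg (by linarith) hδpos.le :
            (ξ.1 + ξ.2 - ε)/δ ≤ 0), min_eq_left zero_le_one]
        have hg0 : g ξ = 0 := by rw [hg]; simp only; rw [hφ0, mul_zero]
        exact ⟨le_of_eq hg0, by rw [hg0, zero_add]; exact (W_mem ξ).1⟩
    -- W vanishes off the strip B k
    have W_off : ∀ ξ : ℝ × ℝ, ξ ∈ (B k)ᶜ → W ξ ≤ 0 := by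
      intro ξ hξ
      rw [hB] at hξ
      simp only [Set.mem_compl_iff, Set.mem_preimage, Set.mem_Icc, not_and_or, not_le] at hξ
      have : min (min ((ξ.1 + ξ.2-(ε-δ))/δ) ((ε+2*δ-(ξ.1 + ξ.2))/δ)) 1 ≤ 0 := by
        rcases hξ with h | h
        · refine le_trans (min_le_left _ _) (le_trans (min_le_left _ _) ?_)
          apply div_nonpos_of_nonpos_of_nonneg _ hδpos.le
          simp only [hδ]; linarith
        · refine le_trans (min_le_left _ _) (le_trans (min_le_right _ _) ?_)
          apply div_nonpos_of_nonpos_of_nonneg _ hδpos.le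
          simp only [hδ]; linarith
      rw [hW, hw]
      simp only
      rw [max_eq_right this]
    -- ∫ W dG is small
    have hWG : ∫ ξ, W ξ ∂(G : Measure (ℝ × ℝ)) < η/4 := by
      have h1 : ENNReal.ofReal (∫ ξ, W ξ ∂(G : Measure (ℝ × ℝ))) ≤ (G : Measure (ℝ × ℝ)) (B k) :=
        integral_le_measure (fun x _ => (W_mem x).2) W_off
      have h2 : ENNReal.ofReal (∫ ξ, W ξ ∂(G : Measure (ℝ × ℝ))) < ENNReal.ofReal (η/4) :=
        lt_of_le_of_lt h1 hk
      have h3 : 0 ≤ ∫ ξ, W ξ ∂(G : Measure (ℝ × ℝ)) :=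
        integral_nonneg fun ξ => (W_mem ξ).1
      have := ENNReal.toReal_lt_of_lt_ofReal h2
      rwa [ENNReal.toReal_ofReal h3] at this
    -- bounded continuous versions
    have gdist : ∀ x y : ℝ × ℝ, dist (g x) (g y) ≤ 1 := by
      intro x y
      rw [Real.dist_eq, abs_le]
      constructor
      · linarith [(g_mem x).1, (g_mem y).2]
      · linarith [(g_mem x).2, (g_mem y).1]
    have Wdist : ∀ x y : ℝ × ℝ, dist (W x) (W y) ≤ 1 := by
      intro x y
      rw [Real.dist_eq, abs_le]
      constructor
      · linarith [(W_mem x).1, (W_mem y).2]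
      · linarith [(W_mem x).2, (W_mem y).1]
    set gb : BoundedContinuousFunction (ℝ × ℝ) ℝ := BoundedContinuousFunction.mkOfBound ⟨g, gcont⟩ 1 gdist with hgb
    set Wb : BoundedContinuousFunction (ℝ × ℝ) ℝ := BoundedContinuousFunction.mkOfBound ⟨W, Wcont⟩ 1 Wdist with hWb
    have hgconv := ProbabilityMeasure.tendsto_iff_forall_integral_tendsto.mp hconv gb
    have hWconv := ProbabilityMeasure.tendsto_iff_forall_integral_tendsto.mp hconv Wb
    have hWn : ∀ᶠ n in atTop,
        ∫ ξ, W ξ ∂(Ghat n : Measure (ℝ × ℝ)) < η/4 := hWconv.eventually_lt_const hWG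
    have hgn : ∀ᶠ n in atTop,
        |(∫ ξ, g ξ ∂(Ghat n : Measure (ℝ × ℝ))) - ∫ ξ, g ξ ∂(G : Measure (ℝ × ℝ))| < η/4 := by
      have := Metric.tendsto_nhds.mp hgconv (η/4) (by positivity)
      filter_upwards [this] with n hn
      rwa [Real.dist_eq] at hn
    -- per-measure integral sandwich
    have int_sand : ∀ (ν : Measure (ℝ × ℝ)) [IsProbabilityMeasure ν],
        ν (Set.Icc 0 M ×ˢ Set.Icc 0 M)ᶜ = 0 →
        (∫ ξ, g ξ ∂ν ≤ ∫ ξ, ψ ε ξ ∂ν ∧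
          ∫ ξ, ψ ε ξ ∂ν ≤ ∫ ξ, g ξ ∂ν + ∫ ξ, W ξ ∂ν) := by
      intro ν _ hν
      have hgint : Integrable g ν := gb.integrable ν
      have hWint : Integrable W ν := Wb.integrable ν
      have hψi : Integrable (ψ ε) ν := ψint ε hε ν hν
      constructor
      · apply integral_mono_ae hgint hψi
        filter_upwards [sq_ae ν hν] with ξ hξ
        exact (sandwich ξ hξ.1 hξ.2).1
      · have : ∫ ξ, g ξ ∂ν + ∫ ξ, W ξ ∂ν = ∫ ξ, (g ξ + W ξ) ∂ν :=
          (integral_add hgint hWint).symm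
        rw [this]
        apply integral_mono_ae hψi (hgint.add hWint)
        filter_upwards [sq_ae ν hν] with ξ hξ
        exact (sandwich ξ hξ.1 hξ.2).2
    obtain ⟨hG1, hG2⟩ := int_sand (G : Measure (ℝ × ℝ)) hGsupp
    filter_upwards [hWn, hgn] with n hWn' hgn'
    obtain ⟨hn1, hn2⟩ := int_sand (Ghat n : Measure (ℝ × ℝ)) (hGhatsupp n)
    rw [Real.dist_eq, abs_lt]
    have hWnn : 0 ≤ ∫ ξ, W ξ ∂(Ghat n : Measure (ℝ × ℝ)) :=
      integral_nonneg fun ξ => (W_mem ξ).1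
    have hWGnn : 0 ≤ ∫ ξ, W ξ ∂(G : Measure (ℝ × ℝ)) :=
      integral_nonneg fun ξ => (W_mem ξ).1
    rw [abs_lt] at hgn'
    constructor <;> linarith
end
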